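/- arXiv:1711.07848 — 4 statements merged into one kernel-verified Lean document; each statement's English description precedes it below -/
import Mathlib

section
/- Every nonzero amplitude of an n-qubit stabilizer state, normalized so that the first nonzero computational-basis amplitude is 1, lies in {±1, ±i}; equivalently, stabilizer states are unbiased: all nonzero amplitudes have equal modulus 1/√|s| where |s| is the support size. -/
open scoped BigOperators

noncomputable section

/-- The state space of `n` qubits, as complex functions on bitstrings. -/
abbrev QState (n : ℕ) : Type := (Fin n → ZMod 2) → ℂ

/-- Hermitian inner product `⟨ψ|φ⟩` (conjugate-linear in the first argument). -/
def qInner {n : ℕ} (ψ φ : QState n) : ℂ := ∑ b, (starRingEnd ℂ) (ψ b) * φ b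

/-- The Pauli operator `i^k · X(x) Z(z)` on `n` qubits. -/
def pauliFun (n : ℕ) (k : ZMod 4) (x z : Fin n → ZMod 2) : QState n → QState n :=
  fun ψ b => Complex.I ^ k.val * (-1 : ℂ) ^ (∑ i, (z i * (b i + x i)).val) * ψ (b + x)

/-- The `n`-qubit Pauli group, as a set of operators. -/
def PauliGroup (n : ℕ) : Set (QState n → QState n) :=
  {U | ∃ k x z, U = pauliFun n k x z}

/-- The stabilizer group of a state: Pauli operators fixing it. -/
def stabGroup (n : ℕ) (ψ : QState n) : Set (QState n → QState n) :=
  {U | U ∈ PauliGroup n ∧ U ψ = ψ}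

/-- An `n`-qubit stabilizer state: a unit vector with `2^n` stabilizers. -/
def IsStabilizerState (n : ℕ) (ψ : QState n) : Prop :=
  qInner ψ ψ = 1 ∧ (stabGroup n ψ).ncard = 2 ^ n

/-- Two states are parallel (equal up to a global phase/scalar). -/
def Parallel {n : ℕ} (ψ φ : QState n) : Prop := ∃ c : ℂ, φ = c • ψ

namespace StabAux

lemma zmod2_cases : ∀ a : ZMod 2, a = 0 ∨ a = 1 := by decide

/-- sign character on `ZMod 2` -/
def χ (a : ZMod 2) : ℂ := (-1 : ℂ) ^ a.val

lemma χ_zero : χ 0 = 1 := rfl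
lemma χ_one : χ 1 = -1 := by
  have : (1 : ZMod 2).val = 1 := by decide
  show (-1:ℂ) ^ (1 : ZMod 2).val = -1
  rw [this, pow_one]

lemma two_eq_zero : (1 + 1 : ZMod 2) = 0 := by decide

lemma χ_add (a b : ZMod 2) : χ (a + b) = χ a * χ b := by
  rcases zmod2_cases a with rfl | rfl <;> rcases zmod2_cases b with rfl | rfl <;>
    simp [χ_zero, χ_one, two_eq_zero]

lemma χ_ne_zero (a : ZMod 2) : χ a ≠ 0 := by
  rcases zmod2_cases a with rfl | rfl <;> simp [χ_zero, χ_one]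

lemma χ_sq (a : ZMod 2) : χ a * χ a = 1 := by
  rcases zmod2_cases a with rfl | rfl <;> simp [χ_zero, χ_one]

lemma χ_pow_four (a : ZMod 2) : χ a ^ 4 = 1 := by
  rcases zmod2_cases a with rfl | rfl <;> norm_num [χ_zero, χ_one]

lemma abs_χ (a : ZMod 2) : ‖χ a‖ = 1 := by
  rcases zmod2_cases a with rfl | rfl <;> simp [χ_zero, χ_one]

lemma χ_eq_one_iff (a : ZMod 2) : χ a = 1 ↔ a = 0 := by
  rcases zmod2_cases a with rfl | rfl <;> simp [χ_zero, χ_one] <;> norm_num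

lemma neg_one_pow_sum {ι : Type*} (s : Finset ι) (f : ι → ZMod 2) :
    (-1 : ℂ) ^ (∑ i ∈ s, (f i).val) = χ (∑ i ∈ s, f i) := by
  classical
  induction s using Finset.cons_induction with
  | empty => simp [χ_zero]
  | cons a s ha ih =>
      rw [Finset.sum_cons, Finset.sum_cons, pow_add, ih, χ_add]
      rfl

/-- i-power character on `ZMod 4` -/
def ι (k : ZMod 4) : ℂ := Complex.I ^ k.val

lemma I_pow_mod (m : ℕ) : Complex.I ^ (m % 4) = Complex.I ^ m := by
  conv_rhs => rw [← Nat.div_add_mod m 4]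
  rw [pow_add, pow_mul, Complex.I_pow_four, one_pow, one_mul]

lemma ι_natCast (m : ℕ) : ι (m : ZMod 4) = Complex.I ^ m := by
  rw [ι, ZMod.val_natCast, I_pow_mod]

lemma ι_add (a b : ZMod 4) : ι (a + b) = ι a * ι b := by
  have h0 : ((a.val + b.val : ℕ) : ZMod 4) = a + b := by
    push_cast [ZMod.natCast_val, ZMod.cast_id]
    ring
  calc ι (a + b) = Complex.I ^ (a.val + b.val) := by rw [← h0, ι_natCast]
  _ = ι a * ι b := by rw [pow_add]; rfl

lemma ι_ne_zero (k : ZMod 4) : ι k ≠ 0 := pow_ne_zero _ Complex.I_ne_zero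

lemma ι_pow_four (k : ZMod 4) : ι k ^ 4 = 1 := by
  rw [ι, ← pow_mul, mul_comm, pow_mul, Complex.I_pow_four, one_pow]

lemma abs_ι (k : ZMod 4) : ‖ι k‖ = 1 := by
  rw [ι, norm_pow, Complex.norm_I, one_pow]

lemma ι_inj : Function.Injective ι := by
  intro a b h
  have h4 : ∀ c : ZMod 4, c = 0 ∨ c = 1 ∨ c = 2 ∨ c = 3 := by decide
  have v0 : (0:ZMod 4).val = 0 := by decide
  have v1 : (1:ZMod 4).val = 1 := by decide
  have v2 : (2:ZMod 4).val = 2 := by decide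
  have v3 : (3:ZMod 4).val = 3 := by decide
  have e0 : ι 0 = 1 := by rw [ι, v0, pow_zero]
  have e1 : ι 1 = Complex.I := by rw [ι, v1, pow_one]
  have e2 : ι 2 = -1 := by rw [ι, v2]; norm_num [Complex.I_sq]
  have e3 : ι 3 = -Complex.I := by
    rw [ι, v3, pow_succ, Complex.I_sq]; ring
  rcases h4 a with rfl|rfl|rfl|rfl <;> rcases h4 b with rfl|rfl|rfl|rfl <;>
    simp only [e0, e1, e2, e3] at h <;>
    first
    | rfl
    | exact absurd h (by norm_num [Complex.ext_iff])

lemma ι_two_mul (a : ZMod 2) : ι ((2 * a.val : ℕ) : ZMod 4) = χ a := by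
  rw [ι_natCast, pow_mul, Complex.I_sq]; rfl

/-- the dot-product bilinear form on `Fin n → ZMod 2` -/
def bform (n : ℕ) : LinearMap.BilinForm (ZMod 2) (Fin n → ZMod 2) :=
  LinearMap.mk₂ (ZMod 2) (fun z v => ∑ i, z i * v i)
    (fun z z' v => by simp [add_mul, Finset.sum_add_distrib])
    (fun c z v => by simp [Finset.mul_sum, mul_assoc])
    (fun z v v' => by simp [mul_add, Finset.sum_add_distrib])
    (fun c z v => by simp [Finset.mul_sum, mul_left_comm])

lemma bform_apply (n : ℕ) (z v : Fin n → ZMod 2) : bform n z v = ∑ i, z i * v i := rfl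

lemma bform_comm (n : ℕ) (z v : Fin n → ZMod 2) : bform n z v = bform n v z := by
  simp [bform_apply, mul_comm]

lemma bform_nondeg (n : ℕ) : (bform n).Nondegenerate := by
  refine (LinearMap.IsRefl.nondegenerate_iff_separatingLeft (fun x y h => by rwa [bform_comm])).mpr ?_
  intro z hz
  funext i
  have := hz (Pi.single i 1)
  rw [bform_apply] at this
  simpa [Pi.single_apply, mul_comm] using this

lemma bform_refl (n : ℕ) : (bform n).IsRefl := by
  intro x y h
  rwa [bform_comm]

lemma add_self_pi {n : ℕ} (v : Fin n → ZMod 2) : v + v = 0 := by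
  funext i
  rcases zmod2_cases (v i) with h | h <;> simp [h, two_eq_zero]

lemma pauli_apply {n : ℕ} (k : ZMod 4) (x z : Fin n → ZMod 2) (φ : QState n)
    (b : Fin n → ZMod 2) :
    pauliFun n k x z φ b = ι k * χ (bform n z (b + x)) * φ (b + x) := by
  have : (∑ i, (z i * (b i + x i)).val : ℕ) = ∑ i, (z i * ((b+x) i)).val := by
    simp [Pi.add_apply]
  rw [pauliFun, this, neg_one_pow_sum, ι, bform_apply]

lemma pauli_comp {n : ℕ} (k1 k2 : ZMod 4) (x1 x2 z1 z2 : Fin n → ZMod 2) (φ : QState n) :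
    pauliFun n k1 x1 z1 (pauliFun n k2 x2 z2 φ) =
      pauliFun n (k1 + k2 + ((2 * (bform n z1 x2).val : ℕ) : ZMod 4)) (x1 + x2) (z1 + z2) φ := by
  funext b
  rw [pauli_apply, pauli_apply, pauli_apply]
  have hx : b + x1 + x2 = b + (x1 + x2) := by rw [add_assoc]
  have hb : b + x1 = b + (x1 + x2) + x2 := by
    rw [add_assoc, add_assoc, add_self_pi, add_zero]
  rw [hx, hb]
  simp only [map_add, LinearMap.add_apply, χ_add, ι_add, ι_two_mul]
  ring

lemma stab_rel {n : ℕ} {k : ZMod 4} {x z : Fin n → ZMod 2} {ψ : QState n}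
    (h : pauliFun n k x z ψ = ψ) (b : Fin n → ZMod 2) :
    ψ b = ι k * χ (bform n z (b + x)) * ψ (b + x) := by
  have := congrFun h b
  rw [pauli_apply] at this
  exact this.symm

lemma mem_fourth_roots {c : ℂ} (h : c ^ 4 = 1) :
    c ∈ ({1, -1, Complex.I, -Complex.I} : Set ℂ) := by
  simp only [Set.mem_insert_iff, Set.mem_singleton_iff]
  have h2 : (c ^ 2 - 1) * (c ^ 2 + 1) = 0 := by linear_combination h
  rcases mul_eq_zero.mp h2 with h3 | h3
  · have : (c - 1) * (c + 1) = 0 := by linear_combination h3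
    rcases mul_eq_zero.mp this with h4 | h4
    · left; exact sub_eq_zero.mp h4
    · right; left; exact eq_neg_of_add_eq_zero_left h4
  · have : (c - Complex.I) * (c + Complex.I) = 0 := by
      linear_combination h3 - Complex.I_sq
    rcases mul_eq_zero.mp this with h4 | h4
    · right; right; left; exact sub_eq_zero.mp h4
    · right; right; right; exact eq_neg_of_add_eq_zero_left h4

lemma key {n : ℕ} (ψ : QState n) (hcard : (stabGroup n ψ).ncard = 2 ^ n)
    (b0 : Fin n → ZMod 2) (hb0 : ψ b0 ≠ 0) (b : Fin n → ZMod 2) (hb : ψ b ≠ 0) :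
    ∃ k z, pauliFun n k (b + b0) z ψ = ψ := by
  classical
  set S : Finset (ZMod 4 × (Fin n → ZMod 2) × (Fin n → ZMod 2)) :=
    Finset.univ.filter (fun p => pauliFun n p.1 p.2.1 p.2.2 ψ = ψ) with hSdef
  have hmemS : ∀ p, p ∈ S ↔ pauliFun n p.1 p.2.1 p.2.2 ψ = ψ := by
    intro p; simp [hSdef]
  have himg : stabGroup n ψ = ↑(S.image fun p => pauliFun n p.1 p.2.1 p.2.2) := by
    ext U
    simp only [stabGroup, PauliGroup, Set.mem_setOf_eq, Finset.coe_image, Set.mem_image,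
      Finset.mem_coe]
    constructor
    · rintro ⟨⟨k, x, z, rfl⟩, h2⟩
      exact ⟨(k, x, z), (hmemS _).mpr h2, rfl⟩
    · rintro ⟨⟨k, x, z⟩, h1, rfl⟩
      exact ⟨⟨k, x, z, rfl⟩, (hmemS _).mp h1⟩
  have hA : 2 ^ n ≤ S.card := by
    rw [himg, Set.ncard_coe_finset] at hcard
    calc 2 ^ n = (S.image fun p => pauliFun n p.1 p.2.1 p.2.2).card := hcard.symm
    _ ≤ S.card := Finset.card_image_le
  set V : Finset (Fin n → ZMod 2) := S.image (fun p => p.2.1) with hVdef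
  set D : Finset (ZMod 4 × (Fin n → ZMod 2)) :=
    Finset.univ.filter (fun q => pauliFun n q.1 0 q.2 ψ = ψ) with hDdef
  have hmemD : ∀ q, q ∈ D ↔ pauliFun n q.1 0 q.2 ψ = ψ := by intro q; simp [hDdef]
  have hB : S.card ≤ D.card * V.card := by
    apply Finset.card_le_mul_card_image
    intro x hx
    obtain ⟨p0, hp0, hp0x⟩ := Finset.mem_image.mp hx
    obtain ⟨k0, x0, z0⟩ := p0
    simp only at hp0x
    subst hp0x
    apply Finset.card_le_card_of_injOn
      (fun p => (p.1 + k0 + ((2 * (bform n p.2.2 x0).val : ℕ) : ZMod 4), p.2.2 + z0))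
    · rintro ⟨k, xp, z⟩ hp
      rw [Finset.mem_coe, Finset.mem_filter] at hp
      obtain ⟨hpS, hpx⟩ := hp
      simp only at hpx
      subst hpx
      have h1 := (hmemS _).mp hpS
      have h0 := (hmemS _).mp hp0
      have hcomp := pauli_comp (n := n) k k0 xp xp z z0 ψ
      rw [h0, h1, add_self_pi] at hcomp
      rw [Finset.mem_coe, hmemD]
      exact hcomp.symm
    · rintro ⟨k, xp, z⟩ hp ⟨k', xp', z'⟩ hp' heq
      simp only [Finset.coe_filter, Set.mem_setOf_eq] at hp hp'
      obtain ⟨-, hpx⟩ := hp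
      obtain ⟨-, hpx'⟩ := hp'
      subst hpx; subst hpx'
      simp only [Prod.mk.injEq] at heq
      obtain ⟨h1, h2⟩ := heq
      have hz : z = z' := by
        have := congrArg (fun w => w + z0) h2
        simpa [add_assoc, add_self_pi] using this
      subst hz
      have hk : k = k' := by
        have := h1
        rwa [add_left_inj, add_left_inj] at this
      subst hk
      rfl
  set L : Submodule (ZMod 2) (Fin n → ZMod 2) :=
    Submodule.span (ZMod 2) {v | ∃ b', ψ b' ≠ 0 ∧ v = b' + b0} with hLdef
  set Wo : Submodule (ZMod 2) (Fin n → ZMod 2) := (bform n).orthogonal L with hWdef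
  have hphase : ∀ k (z : Fin n → ZMod 2), pauliFun n k 0 z ψ = ψ →
      ∀ b', ψ b' ≠ 0 → ι k * χ (bform n z b') = 1 := by
    intro k z h b' hb'
    have hrel := stab_rel h b'
    rw [add_zero] at hrel
    apply mul_right_cancel₀ hb'
    rw [one_mul]
    exact hrel.symm
  have hD_to_W : ∀ q ∈ D, q.2 ∈ Wo := by
    rintro ⟨k, z⟩ hq
    have hfix := (hmemD _).mp hq
    have h0 := hphase k z hfix b0 hb0
    rw [hWdef, LinearMap.BilinForm.mem_orthogonal_iff]
    intro v hv
    rw [hLdef] at hv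
    have hsub : {v : Fin n → ZMod 2 | ∃ b', ψ b' ≠ 0 ∧ v = b' + b0} ⊆
        (LinearMap.ker ((bform n).flip z) : Set _) := by
      rintro v ⟨b', hb', rfl⟩
      have h1 := hphase k z hfix b' hb'
      have hχ : χ (bform n z b') = χ (bform n z b0) :=
        mul_left_cancel₀ (ι_ne_zero k) (h1.trans h0.symm)
      have : χ (bform n z (b' + b0)) = 1 := by
        rw [map_add, χ_add, hχ, χ_sq]
      have hzero := (χ_eq_one_iff _).mp this
      simp only [SetLike.mem_coe, LinearMap.mem_ker]
      show (bform n) (b' + b0) z = 0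
      rw [bform_comm]
      exact hzero
    have := Submodule.span_le.mpr hsub hv
    simp only [LinearMap.mem_ker, LinearMap.flip_apply] at this
    exact this
  haveI : Fintype ↥Wo := Fintype.ofFinite _
  haveI : Fintype ↥L := Fintype.ofFinite _
  haveI : Fintype ↥(Wo : Set (Fin n → ZMod 2)) := Fintype.ofFinite _
  have hD_le : D.card ≤ Fintype.card ↥Wo := by
    have hcg : (Wo : Set (Fin n → ZMod 2)).toFinset.card = Fintype.card ↥Wo := by
      rw [Set.toFinset_card]
      exact Fintype.card_congr (Equiv.refl _)
    rw [← hcg]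
    apply Finset.card_le_card_of_injOn (fun q => q.2)
    · intro q hq
      rw [Finset.mem_coe, Set.mem_toFinset]
      exact hD_to_W q hq
    · rintro ⟨k, z⟩ hk1 ⟨k2, z2⟩ hk2 h
      simp only at h
      subst h
      simp only [Finset.mem_coe] at hk1 hk2
      have e1 := hphase k z ((hmemD _).mp hk1) b0 hb0
      have e2 := hphase k2 z ((hmemD _).mp hk2) b0 hb0
      have : ι k = ι k2 := mul_right_cancel₀ (χ_ne_zero _) (e1.trans e2.symm)
      rw [ι_inj this]
  have hfr : Module.finrank (ZMod 2) ↥L + Module.finrank (ZMod 2) ↥Wo = n := by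
    have h1 := LinearMap.BilinForm.finrank_orthogonal (bform_nondeg n) L
    have h2 : Module.finrank (ZMod 2) (Fin n → ZMod 2) = n := by
      simp [Module.finrank_pi]
    have h3 := Submodule.finrank_le (R := ZMod 2) L
    rw [hWdef, h1, h2]
    omega
  have hcL : Fintype.card ↥L = 2 ^ Module.finrank (ZMod 2) ↥L := by
    have := Module.card_eq_pow_finrank (K := ZMod 2) (V := ↥L)
    rwa [ZMod.card] at this
  have hcW : Fintype.card ↥Wo = 2 ^ Module.finrank (ZMod 2) ↥Wo := by
    have := Module.card_eq_pow_finrank (K := ZMod 2) (V := ↥Wo)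
    rwa [ZMod.card] at this
  have hprod : Fintype.card ↥L * Fintype.card ↥Wo = 2 ^ n := by
    rw [hcL, hcW, ← pow_add, hfr]
  have hV_sub : ↑V ⊆ (L : Set (Fin n → ZMod 2)) := by
    intro x hx
    rw [Finset.mem_coe, hVdef, Finset.mem_image] at hx
    obtain ⟨p, hpS, rfl⟩ := hx
    obtain ⟨k, x, z⟩ := p
    have hfix := (hmemS _).mp hpS
    have hrel := stab_rel hfix b0
    have hne : ψ (b0 + x) ≠ 0 := by
      intro h0
      rw [h0, mul_zero] at hrel
      exact hb0 hrel
    apply Submodule.subset_span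
    refine ⟨b0 + x, hne, ?_⟩
    rw [add_comm b0 x, add_assoc, add_self_pi, add_zero]
  have hWpos : 0 < Fintype.card ↥Wo := Fintype.card_pos
  have hLle : Fintype.card ↥L ≤ V.card := by
    have chain : Fintype.card ↥L * Fintype.card ↥Wo ≤ V.card * Fintype.card ↥Wo := by
      rw [hprod]
      calc 2 ^ n ≤ S.card := hA
      _ ≤ D.card * V.card := hB
      _ ≤ Fintype.card ↥Wo * V.card := Nat.mul_le_mul_right _ hD_le
      _ = V.card * Fintype.card ↥Wo := Nat.mul_comm _ _
    exact Nat.le_of_mul_le_mul_right chain hWpos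
  have hLncard : (L : Set (Fin n → ZMod 2)).ncard = Fintype.card ↥L := by
    rw [← Nat.card_coe_set_eq, Nat.card_eq_fintype_card]
    exact Fintype.card_congr (Equiv.refl _)
  have hLV : (V : Set (Fin n → ZMod 2)) = (L : Set (Fin n → ZMod 2)) := by
    apply Set.eq_of_subset_of_ncard_le hV_sub
    rw [hLncard, Set.ncard_coe_finset]; exact hLle
  have hbM : (b + b0) ∈ (L : Set (Fin n → ZMod 2)) :=
    Submodule.subset_span ⟨b, hb, rfl⟩
  rw [← hLV, Finset.mem_coe, hVdef, Finset.mem_image] at hbM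
  obtain ⟨⟨k, x, z⟩, hpS, hpx⟩ := hbM
  simp only at hpx
  subst hpx
  exact ⟨k, z, (hmemS _).mp hpS⟩



end StabAux

/-- Stabilizer states are unbiased: every nonzero amplitude has modulus
`1/√|s|` where `|s|` is the support size, and the ratio of any two nonzero
amplitudes lies in `{1, -1, i, -i}` (so, normalizing the first nonzero
amplitude to `1`, all nonzero amplitudes lie in `{±1, ±i}`). -/
theorem stabilizer_amplitudes (n : ℕ) (ψ : QState n)
    (hψ : IsStabilizerState n ψ) :
    (∀ b : Fin n → ZMod 2, ψ b ≠ 0 →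
      ‖ψ b‖ = 1 / Real.sqrt ({x | ψ x ≠ 0}.ncard)) ∧
    (∀ b b' : Fin n → ZMod 2, ψ b ≠ 0 → ψ b' ≠ 0 →
      ψ b / ψ b' ∈ ({1, -1, Complex.I, -Complex.I} : Set ℂ)) := by
  classical
  obtain ⟨hunit, hcard⟩ := hψ
  have hex : ∃ b0, ψ b0 ≠ 0 := by
    by_contra h
    push_neg at h
    rw [qInner] at hunit
    simp [h] at hunit
  obtain ⟨b0, hb0⟩ := hex
  have hc : ∀ b, ψ b ≠ 0 → ∃ c : ℂ, c ^ 4 = 1 ∧ ‖c‖ = 1 ∧ ψ b0 = c * ψ b := by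
    intro b hb
    obtain ⟨k, z, hfix⟩ := StabAux.key ψ hcard b0 hb0 b hb
    have heq : b0 + (b + b0) = b := by
      rw [add_comm b b0, ← add_assoc, StabAux.add_self_pi, zero_add]
    have hrel := StabAux.stab_rel hfix b0
    rw [heq] at hrel
    exact ⟨_, by rw [mul_pow, StabAux.ι_pow_four, StabAux.χ_pow_four, one_mul],
      by rw [norm_mul, StabAux.abs_ι, StabAux.abs_χ, one_mul], hrel⟩
  set sF : Finset (Fin n → ZMod 2) := Finset.univ.filter (fun x => ψ x ≠ 0) with hsF
  have hb0s : b0 ∈ sF := by simp [hsF, hb0]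
  have hset : {x | ψ x ≠ 0} = ↑sF := by ext x; simp [hsF]
  have hcards : {x | ψ x ≠ 0}.ncard = sF.card := by rw [hset, Set.ncard_coe_finset]
  have hsum : ∑ x, Complex.normSq (ψ x) = 1 := by
    have h1 : qInner ψ ψ = ((∑ x, Complex.normSq (ψ x) : ℝ) : ℂ) := by
      rw [qInner]
      push_cast
      apply Finset.sum_congr rfl
      intro x _
      rw [Complex.normSq_eq_conj_mul_self]
    rw [hunit] at h1
    exact_mod_cast h1.symm
  have habs : ∀ x ∈ sF, ‖ψ x‖ = ‖ψ b0‖ := by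
    intro x hx
    rw [hsF, Finset.mem_filter] at hx
    obtain ⟨c, -, hc1, hc2⟩ := hc x hx.2
    rw [hc2, norm_mul, hc1, one_mul]
  have hns : ∀ x ∈ sF, Complex.normSq (ψ x) = Complex.normSq (ψ b0) := by
    intro x hx
    rw [← Complex.sq_norm, ← Complex.sq_norm (ψ b0), habs x hx]
  have hsum2 : (sF.card : ℝ) * Complex.normSq (ψ b0) = 1 := by
    calc (sF.card : ℝ) * Complex.normSq (ψ b0)
        = ∑ _x ∈ sF, Complex.normSq (ψ b0) := by rw [Finset.sum_const, nsmul_eq_mul]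
      _ = ∑ x ∈ sF, Complex.normSq (ψ x) := (Finset.sum_congr rfl hns).symm
      _ = ∑ x, Complex.normSq (ψ x) := by
          apply Finset.sum_filter_of_ne
          intro x _ h0
          intro hzero
          apply h0
          rw [hzero, map_zero]
      _ = 1 := hsum
  have hnormSq : Complex.normSq (ψ b0) = 1 / (sF.card : ℝ) :=
    eq_one_div_of_mul_eq_one_left (by rw [mul_comm]; exact hsum2)
  constructor
  · intro x hx
    have hxs : x ∈ sF := by simp [hsF, hx]
    rw [habs x hxs, hcards, Complex.norm_def, hnormSq, one_div, Real.sqrt_inv, one_div]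
  · intro b b' hbne hbne'
    obtain ⟨cb, hcb4, -, hcb⟩ := hc b hbne
    obtain ⟨cb', hcb'4, -, hcb'⟩ := hc b' hbne'
    have hcbne : cb ≠ 0 := by intro h; rw [h] at hcb4; norm_num at hcb4
    have hψb : ψ b = cb⁻¹ * (cb' * ψ b') := by
      rw [← hcb', hcb, inv_mul_cancel_left₀ hcbne]
    have hr : ψ b / ψ b' = cb⁻¹ * cb' := by
      rw [hψb, ← mul_assoc, mul_div_assoc, div_self hbne', mul_one]
    apply StabAux.mem_fourth_roots
    rw [hr, mul_pow, inv_pow, hcb4, hcb'4, inv_one, one_mul]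
end
end

section
/- Fix m ≥ 0 and define a_{n,k} = L_n(k)/N(n), the fraction of stabilizer states at k-neighbor distance from a fixed stabilizer state. Then the sequence {a_{n,n−m}} is monotone in n (increasing for m > 0, decreasing for m = 0) and convergent as n → ∞. -/
open scoped BigOperators

noncomputable section

/-- The number of `k`-neighbors of an `n`-qubit stabilizer state. -/
def Lcount (n k : ℕ) : ℝ :=
  2 ^ ((k : ℤ) * ((k : ℤ) + 1 - (n : ℤ))) *
    ∏ j ∈ Finset.range k, (((4 : ℝ) ^ n / 2 ^ j - 2 ^ n) / (2 ^ k - 2 ^ j))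

/-- The total number of `n`-qubit stabilizer states. -/
def Ncount (n : ℕ) : ℝ := 2 ^ n * ∏ k ∈ Finset.range n, ((2 : ℝ) ^ (n - k) + 1)

/-- The fraction of stabilizer states that are `k`-neighbors of a fixed one. -/
def aSeq (n k : ℕ) : ℝ := Lcount n k / Ncount n

lemma Ncount_pos (n : ℕ) : 0 < Ncount n := by
  unfold Ncount
  apply mul_pos (by positivity)
  exact Finset.prod_pos fun i _ => by positivity

lemma Lcount_pos {n k : ℕ} (hk : k ≤ n) : 0 < Lcount n k := by
  unfold Lcount
  apply mul_pos (zpow_pos two_pos _)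
  apply Finset.prod_pos
  intro j hj
  rw [Finset.mem_range] at hj
  apply div_pos
  · rw [sub_pos, lt_div_iff₀ (by positivity : (0:ℝ) < 2 ^ j)]
    have h4 : (4:ℝ) ^ n = 2 ^ (n + n) := by rw [pow_add, ← mul_pow]; norm_num
    rw [h4, ← pow_add]
    exact pow_lt_pow_right₀ one_lt_two (by omega)
  · rw [sub_pos]
    exact pow_lt_pow_right₀ one_lt_two hj

lemma aSeq_pos {n k : ℕ} (hk : k ≤ n) : 0 < aSeq n k :=
  div_pos (Lcount_pos hk) (Ncount_pos n)

lemma Ncount_succ (n : ℕ) : Ncount (n+1) = 2 * (2 ^ (n+1) + 1) * Ncount n := by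
  unfold Ncount
  rw [Finset.prod_range_succ']
  simp only [Nat.succ_sub_succ, Nat.sub_zero]
  ring

lemma Lcount_succ {n k : ℕ} (hk : k ≤ n) :
    Lcount (n+1) (k+1) = Lcount n k * 2 ^ ((k:ℤ) + 1 - (n:ℤ)) *
      ((4 ^ (n+1) - 2 ^ (n+1)) / (2 ^ (k+1) - 1)) := by
  unfold Lcount
  rw [Finset.prod_range_succ']
  have hexp : ((k:ℤ)+1) * (((k:ℤ)+1) + 1 - ((n:ℤ)+1)) =
      (k:ℤ) * ((k:ℤ) + 1 - (n:ℤ)) + ((k:ℤ) + 1 - (n:ℤ)) := by ring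
  have hterm : ∀ j ∈ Finset.range k,
      ((4:ℝ) ^ (n+1) / 2 ^ (j+1) - 2 ^ (n+1)) / (2 ^ (k+1) - 2 ^ (j+1)) =
      ((4:ℝ) ^ n / 2 ^ j - 2 ^ n) / (2 ^ k - 2 ^ j) := by
    intro j _
    have h1 : (4:ℝ) ^ (n+1) / 2 ^ (j+1) - 2 ^ (n+1) = 2 * ((4:ℝ) ^ n / 2 ^ j - 2 ^ n) := by
      have : (2:ℝ) ^ j ≠ 0 := by positivity
      field_simp
      ring
    have h2 : (2:ℝ) ^ (k+1) - 2 ^ (j+1) = 2 * ((2:ℝ) ^ k - 2 ^ j) := by ring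
    rw [h1, h2, mul_div_mul_left _ _ (two_ne_zero)]
  push_cast [hexp]
  rw [Finset.prod_congr rfl hterm, zpow_add₀ (two_ne_zero)]
  push_cast
  ring

lemma aSeq_ratio {n k : ℕ} (hk : k ≤ n) :
    aSeq (n+1) (k+1) * ((2 ^ (k+1) - 1) * (2 ^ (n+1) + 1)) =
    aSeq n k * (2 ^ (k+1) * (2 ^ (n+1) - 1)) := by
  unfold aSeq
  rw [Lcount_succ hk, Ncount_succ]
  have hz : (2:ℝ) ^ ((k:ℤ) + 1 - (n:ℤ)) = 2 ^ (k+2) / 2 ^ (n+1) := by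
    have : ((k:ℤ) + 1 - (n:ℤ)) = (((k+2 : ℕ)):ℤ) - (((n+1 : ℕ)):ℤ) := by push_cast; ring
    rw [this, zpow_sub₀ (two_ne_zero), zpow_natCast, zpow_natCast]
  have h4 : (4:ℝ) ^ (n+1) = 2 ^ (n+1) * 2 ^ (n+1) := by rw [← mul_pow]; norm_num
  have hN : Ncount n ≠ 0 := (Ncount_pos n).ne'
  have hk1 : (2:ℝ) ^ (k+1) - 1 ≠ 0 := by
    have : (1:ℝ) < 2 ^ (k+1) := one_lt_pow₀ one_lt_two (by omega)
    linarith
  have hn1 : (2:ℝ) ^ (n+1) + 1 ≠ 0 := by positivity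
  have h2n : (2:ℝ) ^ (n+1) ≠ 0 := by positivity
  rw [hz, h4]
  have hkk : (2:ℝ) ^ (k+2) = 2 ^ (k+1) * 2 := by ring
  field_simp
  ring

lemma aux_facts (n k : ℕ) :
    (1:ℝ) ≤ 2 ^ k ∧ (0:ℝ) < (2 ^ (k+1) - 1 : ℝ) * (2 ^ (n+1) + 1) := by
  constructor
  · exact one_le_pow₀ one_le_two
  · have h1 : (1:ℝ) < 2 ^ (k+1) := one_lt_pow₀ one_lt_two (by omega)
    have h2 : (0:ℝ) < 2 ^ (n+1) + 1 := by positivity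
    nlinarith

lemma aSeq_lt_succ {n k : ℕ} (h : k < n) : aSeq n k < aSeq (n+1) (k+1) := by
  have hr := aSeq_ratio h.le
  have ha := aSeq_pos h.le
  obtain ⟨hx, hD⟩ := aux_facts n k
  have hp : (2:ℝ) ^ (k+2) ≤ 2 ^ (n+1) := pow_le_pow_right₀ one_le_two (by omega)
  have hNm : ((2:ℝ) ^ (k+1) - 1) * (2 ^ (n+1) + 1) < 2 ^ (k+1) * (2 ^ (n+1) - 1) := by
    have e1 : (2:ℝ) ^ (k+2) = 2 ^ (k+1) * 2 := by ring
    nlinarith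
  nlinarith

lemma aSeq_succ_lt_self (n : ℕ) : aSeq (n+1) (n+1) < aSeq n n := by
  have hr := aSeq_ratio (le_refl n)
  have ha := aSeq_pos (le_refl n)
  obtain ⟨hx, hD⟩ := aux_facts n n
  have hNm : (2:ℝ) ^ (n+1) * (2 ^ (n+1) - 1) < ((2:ℝ) ^ (n+1) - 1) * (2 ^ (n+1) + 1) := by
    nlinarith [one_le_pow₀ (M₀ := ℝ) (n := n+1) one_le_two]
  have ha' := aSeq_pos (le_refl (n+1))
  nlinarith

lemma aSeq_succ_le {n k : ℕ} (hk : k ≤ n) :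
    aSeq (n+1) (k+1) ≤ aSeq n k * (1 + (1/2) ^ k) := by
  have hr := aSeq_ratio hk
  have ha := aSeq_pos hk
  obtain ⟨hx, hD⟩ := aux_facts n k
  have hy : (0:ℝ) < 2 ^ (n+1) := by positivity
  have hhalf : ((1:ℝ)/2) ^ k = 1 / 2 ^ k := by rw [div_pow, one_pow]
  have hxpos : (0:ℝ) < 2 ^ k := by positivity
  have hND : (2:ℝ) ^ (k+1) * (2 ^ (n+1) - 1) ≤
      (1 + (1/2) ^ k) * ((2 ^ (k+1) - 1) * (2 ^ (n+1) + 1)) := by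
    rw [hhalf]
    have e1 : (2:ℝ) ^ (k+1) = 2 ^ k * 2 := by ring
    rw [e1]
    have e2 : (1:ℝ) + 1 / 2 ^ k = (2 ^ k + 1) / 2 ^ k := by field_simp
    rw [e2, div_mul_eq_mul_div, le_div_iff₀ hxpos]
    nlinarith [mul_nonneg (sub_nonneg.2 hx) hy.le]
  nlinarith [mul_le_mul_of_nonneg_left hND ha.le]

lemma aSeq_bound (m : ℕ) (t : ℕ) :
    aSeq (t+m+1) (t+1) ≤ aSeq (m+1) 1 * Real.exp (1 - (1/2) ^ t) := by
  induction t with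
  | zero => simp
  | succ t ih =>
    have h1 : aSeq (t+m+1+1) (t+1+1) ≤ aSeq (t+m+1) (t+1) * (1 + (1/2) ^ (t+1)) :=
      aSeq_succ_le (by omega)
    have hc : (0:ℝ) ≤ 1 + (1/2 : ℝ) ^ (t+1) := by positivity
    have h2 : aSeq (t+m+1) (t+1) * (1 + (1/2) ^ (t+1)) ≤
        aSeq (m+1) 1 * Real.exp (1 - (1/2) ^ t) * (1 + (1/2) ^ (t+1)) :=
      mul_le_mul_of_nonneg_right ih hc
    have h3 : (1:ℝ) + (1/2) ^ (t+1) ≤ Real.exp ((1/2 : ℝ) ^ (t+1)) := by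
      have := Real.add_one_le_exp ((1/2 : ℝ) ^ (t+1)); linarith
    have hA : (0:ℝ) ≤ aSeq (m+1) 1 * Real.exp (1 - (1/2) ^ t) :=
      mul_nonneg (aSeq_pos (by omega)).le (Real.exp_pos _).le
    have h4 : aSeq (m+1) 1 * Real.exp (1 - (1/2) ^ t) * (1 + (1/2) ^ (t+1)) ≤
        aSeq (m+1) 1 * Real.exp (1 - (1/2) ^ t) * Real.exp ((1/2 : ℝ) ^ (t+1)) :=
      mul_le_mul_of_nonneg_left h3 hA
    have h5 : aSeq (m+1) 1 * Real.exp (1 - (1/2) ^ t) * Real.exp ((1/2 : ℝ) ^ (t+1)) =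
        aSeq (m+1) 1 * Real.exp (1 - (1/2) ^ (t+1)) := by
      rw [mul_assoc, ← Real.exp_add]
      congr 1
      rw [pow_succ]
      ring
    have : t+1+m+1 = t+m+1+1 := by omega
    rw [this]
    calc aSeq (t+m+1+1) (t+1+1) ≤ _ := h1
      _ ≤ _ := h2
      _ ≤ _ := h4
      _ = _ := h5

/-- For fixed `m`, the sequence `a_{n, n-m}` is monotone in `n` (increasing for
`m > 0`, decreasing for `m = 0`) and convergent as `n → ∞`. -/
theorem aSeq_monotone_convergent (m : ℕ) :
    (∀ n : ℕ, m + 1 ≤ n →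
      (0 < m → aSeq n (n - m) < aSeq (n + 1) (n + 1 - m)) ∧
      (m = 0 → aSeq (n + 1) (n + 1) < aSeq n n)) ∧
    ∃ c : ℝ, Filter.Tendsto (fun n : ℕ => aSeq n (n - m)) Filter.atTop (nhds c) := by
  constructor
  · intro n hn
    constructor
    · intro hm
      have h1 : n + 1 - m = (n - m) + 1 := by omega
      rw [h1]
      exact aSeq_lt_succ (by omega)
    · intro _; exact aSeq_succ_lt_self n
  · set g : ℕ → ℝ := fun t => aSeq (t + (m+1)) (t + (m+1) - m) with hg
    have hg' : ∀ t, g t = aSeq (t+m+1) (t+1) := by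
      intro t; simp only [hg]; congr 1 <;> omega
    rcases Nat.eq_zero_or_pos m with hm | hm
    · subst hm
      refine ⟨⨅ t, g t, (Filter.tendsto_add_atTop_iff_nat
        (f := fun n => aSeq n (n - 0)) 1).mp ?_⟩
      have hanti : Antitone g := by
        apply antitone_nat_of_succ_le
        intro t
        rw [hg' t, hg' (t+1)]
        exact (aSeq_succ_lt_self (t+0+1)).le.trans_eq (by norm_num)
      exact tendsto_atTop_ciInf hanti
        ⟨0, by
          rintro _ ⟨t, rfl⟩
          exact (aSeq_pos (show t + 1 - 0 ≤ t + 1 by omega)).le⟩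
    · refine ⟨⨆ t, g t, ?_⟩
      rw [← Filter.tendsto_add_atTop_iff_nat (m+1)]
      have hmono : Monotone g := by
        apply monotone_nat_of_le_succ
        intro t
        rw [hg' t, hg' (t+1)]
        have : t+1+m+1 = (t+m+1)+1 := by omega
        rw [this]
        exact (aSeq_lt_succ (by omega)).le
      exact tendsto_atTop_ciSup hmono
        ⟨aSeq (m+1) 1 * Real.exp 1, by
          rintro _ ⟨t, rfl⟩
          show aSeq (t + (m+1)) (t + (m+1) - m) ≤ _
          have e1 : t + (m+1) - m = t + 1 := by omega
          have e2 : t + (m+1) = t + m + 1 := by omega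
          rw [e1, e2]
          refine (aSeq_bound m t).trans ?_
          refine mul_le_mul_of_nonneg_left (Real.exp_le_exp.2 ?_) (aSeq_pos (by omega)).le
          have : (0:ℝ) ≤ (1/2 : ℝ) ^ t := by positivity
          linarith⟩
end
end

section
/- If |ψ⟩ and |φ⟩ are n-qubit stabilizer states drawn independently and uniformly at random, then the expected value of |⟨ψ|φ⟩| tends to 0 as n → ∞. -/
open scoped BigOperators

noncomputable section

-- basic arithmetic lemmas
lemma npc (m n : ℕ) (h : m % 2 = n % 2) : ((-1:ℂ))^m = (-1)^n := by
  rw [← Nat.div_add_mod m 2, ← Nat.div_add_mod n 2, pow_add, pow_add, pow_mul, pow_mul, h]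
  norm_num

lemma I_pow_mod (m : ℕ) : Complex.I ^ m = Complex.I ^ (m % 4) := by
  conv_lhs => rw [← Nat.div_add_mod m 4]
  rw [pow_add, pow_mul, Complex.I_pow_four, one_pow, one_mul]

lemma I_pow_val_add (a b : ZMod 4) :
    Complex.I ^ (a+b).val = Complex.I ^ a.val * Complex.I ^ b.val := by
  rw [ZMod.val_add, ← I_pow_mod, pow_add]

lemma I_pow_two_smul (s : ℕ) : Complex.I ^ ((2 * (s:ZMod 4)).val) = (-1:ℂ)^s := by
  have h : ((2 * (s:ZMod 4))) = ((2*s : ℕ) : ZMod 4) := by push_cast; ring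
  rw [h, ZMod.val_natCast, ← I_pow_mod, pow_mul]
  norm_num

lemma conj_I_pow (v : ℕ) :
    (starRingEnd ℂ) (Complex.I ^ v) * Complex.I ^ v = 1 := by
  rw [map_pow, ← mul_pow, Complex.conj_I, neg_mul, Complex.I_mul_I, neg_neg, one_pow]

-- sign notation
def sg {n : ℕ} (z w : Fin n → ZMod 2) : ℂ := (-1:ℂ)^(∑ i, (z i * w i).val)

lemma sum_val_mod {n : ℕ} (f g : Fin n → ZMod 2) :
    (∑ i, (f i + g i).val) % 2 = ((∑ i, (f i).val) + (∑ i, (g i).val)) % 2 := by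
  rw [Finset.sum_nat_mod]
  conv_lhs => rw [show (∑ i, (f i + g i).val % 2) = ∑ i, ((f i).val + (g i).val) % 2 from
    Finset.sum_congr rfl (fun i _ => by rw [ZMod.val_add, Nat.mod_mod_of_dvd _ dvd_rfl])]
  rw [← Finset.sum_nat_mod, Finset.sum_add_distrib]

lemma sg_add_right {n : ℕ} (z w w' : Fin n → ZMod 2) : sg z (w + w') = sg z w * sg z w' := by
  unfold sg
  rw [← pow_add]
  apply npc
  rw [← sum_val_mod]
  congr 1
  apply Finset.sum_congr rfl
  intro i _
  rw [Pi.add_apply, mul_add]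

lemma sg_sq {n : ℕ} (z w : Fin n → ZMod 2) : sg z w * sg z w = 1 := by
  unfold sg
  rw [← pow_add, ← two_mul, pow_mul]
  norm_num

lemma conj_sg {n : ℕ} (z w : Fin n → ZMod 2) : (starRingEnd ℂ) (sg z w) = sg z w := by
  unfold sg
  rw [map_pow, map_neg, map_one]

-- pauliFun basic form
lemma pauliFun_apply {n : ℕ} (k : ZMod 4) (x z : Fin n → ZMod 2) (ψ : QState n)
    (b : Fin n → ZMod 2) :
    pauliFun n k x z ψ b = Complex.I ^ k.val * sg z (b + x) * ψ (b + x) := rfl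

lemma pauli_smul {n : ℕ} (k : ZMod 4) (x z : Fin n → ZMod 2) (c : ℂ) (ψ : QState n) :
    pauliFun n k x z (c • ψ) = c • pauliFun n k x z ψ := by
  funext b
  simp only [pauliFun, Pi.smul_apply, smul_eq_mul]
  ring

lemma pauli_qInner {n : ℕ} (k : ZMod 4) (x z : Fin n → ZMod 2) (ψ φ : QState n) :
    qInner (pauliFun n k x z ψ) (pauliFun n k x z φ) = qInner ψ φ := by
  unfold qInner
  have key : ∀ b : Fin n → ZMod 2,
      (starRingEnd ℂ) (pauliFun n k x z ψ b) * pauliFun n k x z φ b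
      = (starRingEnd ℂ) (ψ (b + x)) * φ (b + x) := by
    intro b
    rw [pauliFun_apply, pauliFun_apply, map_mul, map_mul, conj_sg]
    have h1 := conj_I_pow k.val
    have h2 := sg_sq z (b + x)
    calc (starRingEnd ℂ) (Complex.I ^ k.val) * sg z (b + x) * (starRingEnd ℂ) (ψ (b + x)) *
          (Complex.I ^ k.val * sg z (b + x) * φ (b + x))
        = ((starRingEnd ℂ) (Complex.I ^ k.val) * Complex.I ^ k.val) * (sg z (b+x) * sg z (b+x)) *
          ((starRingEnd ℂ) (ψ (b + x)) * φ (b + x)) := by ring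
      _ = (starRingEnd ℂ) (ψ (b + x)) * φ (b + x) := by rw [h1, h2]; ring
  simp only [key]
  exact Fintype.sum_equiv (Equiv.addRight x) _ _ (fun b => rfl)

lemma self_add_self {n : ℕ} (w : Fin n → ZMod 2) : w + w = 0 := by
  funext i
  exact CharTwo.add_self_eq_zero (w i)

lemma Xop_apply {n : ℕ} (x' : Fin n → ZMod 2) (ψ : QState n) (b : Fin n → ZMod 2) :
    pauliFun n 0 x' 0 ψ b = ψ (b + x') := by
  simp [pauliFun]

lemma Zop_apply {n : ℕ} (z' : Fin n → ZMod 2) (ψ : QState n) (b : Fin n → ZMod 2) :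
    pauliFun n 0 0 z' ψ b = sg z' b * ψ b := by
  simp [pauliFun, sg]

lemma Xop_invol {n : ℕ} (x' : Fin n → ZMod 2) (ψ : QState n) :
    pauliFun n 0 x' 0 (pauliFun n 0 x' 0 ψ) = ψ := by
  funext b
  rw [Xop_apply, Xop_apply, add_assoc, self_add_self, add_zero]

lemma Zop_invol {n : ℕ} (z' : Fin n → ZMod 2) (ψ : QState n) :
    pauliFun n 0 0 z' (pauliFun n 0 0 z' ψ) = ψ := by
  funext b
  rw [Zop_apply, Zop_apply, ← mul_assoc, sg_sq, one_mul]

lemma conjX {n : ℕ} (x' : Fin n → ZMod 2) (k : ZMod 4) (x z : Fin n → ZMod 2) :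
    pauliFun n 0 x' 0 ∘ pauliFun n k x z ∘ pauliFun n 0 x' 0
      = pauliFun n (k + 2 * ((∑ i, (z i * x' i).val : ℕ) : ZMod 4)) x z := by
  funext ψ b
  show pauliFun n 0 x' 0 (pauliFun n k x z (pauliFun n 0 x' 0 ψ)) b = _
  rw [Xop_apply, pauliFun_apply, Xop_apply, pauliFun_apply, I_pow_val_add, I_pow_two_smul]
  have hb : b + x' + x + x' = b + x := by
    rw [show b + x' + x + x' = b + x + (x' + x') by ring, self_add_self, add_zero]
  rw [hb]
  have hs : sg z (b + x' + x) = sg z (b + x) * sg z x' := by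
    rw [show b + x' + x = (b + x) + x' by ring, sg_add_right]
  rw [hs]
  unfold sg
  ring

lemma conjZ {n : ℕ} (z' : Fin n → ZMod 2) (k : ZMod 4) (x z : Fin n → ZMod 2) :
    pauliFun n 0 0 z' ∘ pauliFun n k x z ∘ pauliFun n 0 0 z'
      = pauliFun n (k + 2 * ((∑ i, (z' i * x i).val : ℕ) : ZMod 4)) x z := by
  funext ψ b
  show pauliFun n 0 0 z' (pauliFun n k x z (pauliFun n 0 0 z' ψ)) b = _
  rw [Zop_apply, pauliFun_apply, Zop_apply, pauliFun_apply, I_pow_val_add, I_pow_two_smul]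
  have hs : sg z' b * sg z' (b + x) = sg z' x := by
    rw [← sg_add_right, show b + (b + x) = x by rw [← add_assoc, self_add_self, zero_add]]
  calc sg z' b * (Complex.I ^ k.val * sg z (b + x) * (sg z' (b + x) * ψ (b + x)))
      = Complex.I ^ k.val * (sg z' b * sg z' (b + x)) * sg z (b + x) * ψ (b + x) := by ring
    _ = _ := by rw [hs]; unfold sg; ring

lemma stab_conj {n : ℕ} (U : QState n → QState n) (hU : U ∈ PauliGroup n)
    (hinv : ∀ ψ, U (U ψ) = ψ)
    (hconj : ∀ P ∈ PauliGroup n, U ∘ P ∘ U ∈ PauliGroup n)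
    (φ : QState n) (h : IsStabilizerState n φ) : IsStabilizerState n (U φ) := by
  obtain ⟨hnorm, hcard⟩ := h
  constructor
  · obtain ⟨k, x, z, rfl⟩ := hU
    rw [pauli_qInner]; exact hnorm
  · have hinj : Function.Injective (fun P : QState n → QState n => U ∘ P ∘ U) := by
      intro P Q hPQ
      funext χ
      have h1 : U (P (U (U χ))) = U (Q (U (U χ))) := congrFun hPQ (U χ)
      rw [hinv] at h1
      have := congrArg U h1
      rwa [hinv, hinv] at this
    have himg : stabGroup n (U φ) = (fun P => U ∘ P ∘ U) '' stabGroup n φ := by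
      ext Q
      constructor
      · rintro ⟨hQP, hQfix⟩
        refine ⟨U ∘ Q ∘ U, ⟨hconj Q hQP, ?_⟩, ?_⟩
        · show U (Q (U φ)) = φ
          rw [hQfix, hinv]
        · funext ψ
          show U (U (Q (U (U ψ)))) = Q ψ
          rw [hinv, hinv]
      · rintro ⟨P, ⟨hPP, hPfix⟩, rfl⟩
        refine ⟨hconj P hPP, ?_⟩
        show U (P (U (U φ))) = U φ
        rw [hinv, hPfix]
    rw [himg, Set.ncard_image_of_injective _ hinj]
    exact hcard

lemma stab_X {n : ℕ} (x' : Fin n → ZMod 2) (φ : QState n) (h : IsStabilizerState n φ) :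
    IsStabilizerState n (pauliFun n 0 x' 0 φ) := by
  apply stab_conj _ ⟨0, x', 0, rfl⟩ (Xop_invol x') _ _ h
  rintro P ⟨k, x, z, rfl⟩
  exact ⟨_, _, _, conjX x' k x z⟩

lemma stab_Z {n : ℕ} (z' : Fin n → ZMod 2) (φ : QState n) (h : IsStabilizerState n φ) :
    IsStabilizerState n (pauliFun n 0 0 z' φ) := by
  apply stab_conj _ ⟨0, 0, z', rfl⟩ (Zop_invol z') _ _ h
  rintro P ⟨k, x, z, rfl⟩
  exact ⟨_, _, _, conjZ z' k x z⟩

lemma qInner_smul {n : ℕ} (c : ℂ) (ψ : QState n) :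
    qInner (c • ψ) (c • ψ) = (starRingEnd ℂ) c * c * qInner ψ ψ := by
  unfold qInner
  rw [Finset.mul_sum]
  apply Finset.sum_congr rfl
  intro b _
  simp only [Pi.smul_apply, smul_eq_mul, map_mul]
  ring

lemma sum_invariant {n : ℕ} (T : Finset (QState n))
    (hstab : ∀ ψ ∈ T, IsStabilizerState n ψ)
    (hrep : ∀ φ : QState n, IsStabilizerState n φ → ∃ ψ ∈ T, Parallel ψ φ)
    (huniq : ∀ ψ ∈ T, ∀ φ ∈ T, Parallel ψ φ → ψ = φ)
    (U : QState n → QState n)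
    (hUstab : ∀ φ, IsStabilizerState n φ → IsStabilizerState n (U φ))
    (hUinv : ∀ ψ, U (U ψ) = ψ)
    (hUsmul : ∀ (c : ℂ) ψ, U (c • ψ) = c • U ψ)
    (F : QState n → ℂ)
    (hF : ∀ φ (c : ℂ), (starRingEnd ℂ) c * c = 1 → F (c • φ) = F φ) :
    ∑ φ ∈ T, F (U φ) = ∑ φ ∈ T, F φ := by
  classical
  choose r hrT hpar using fun φ (hφ : φ ∈ T) => hrep (U φ) (hUstab φ (hstab φ hφ))
  choose c hc using hpar
  -- the phases are unimodular
  have hcu : ∀ φ (hφ : φ ∈ T), (starRingEnd ℂ) (c φ hφ) * (c φ hφ) = 1 := by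
    intro φ hφ
    have h1 : qInner (U φ) (U φ) = 1 := (hUstab φ (hstab φ hφ)).1
    have h2 : qInner (r φ hφ) (r φ hφ) = 1 := (hstab _ (hrT φ hφ)).1
    rw [hc φ hφ, qInner_smul, h2, mul_one] at h1
    exact h1
  have hinj : ∀ φ₁ (h₁ : φ₁ ∈ T) φ₂ (h₂ : φ₂ ∈ T), r φ₁ h₁ = r φ₂ h₂ → φ₁ = φ₂ := by
    intro φ₁ h₁ φ₂ h₂ hr
    have hc1 : c φ₁ h₁ ≠ 0 := by
      intro h0
      have := hcu φ₁ h₁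
      rw [h0, mul_zero] at this
      exact one_ne_zero this.symm
    have e1 : φ₁ = c φ₁ h₁ • U (r φ₁ h₁) := by
      rw [← hUsmul, ← hc φ₁ h₁, hUinv]
    have e2 : φ₂ = c φ₂ h₂ • U (r φ₁ h₁) := by
      rw [hr, ← hUsmul, ← hc φ₂ h₂, hUinv]
    refine huniq φ₁ h₁ φ₂ h₂ ⟨c φ₂ h₂ * (c φ₁ h₁)⁻¹, ?_⟩
    have key : (c φ₂ h₂ * (c φ₁ h₁)⁻¹) • (c φ₁ h₁ • U (r φ₁ h₁)) = c φ₂ h₂ • U (r φ₁ h₁) := by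
      rw [smul_smul, mul_assoc, inv_mul_cancel₀ hc1, mul_one]
    exact e2.trans (key.symm.trans (congrArg (fun w => (c φ₂ h₂ * (c φ₁ h₁)⁻¹) • w) e1.symm))
  refine Finset.sum_bij (fun φ hφ => r φ hφ) (fun φ hφ => hrT φ hφ)
    (fun a₁ ha₁ a₂ ha₂ h => hinj a₁ ha₁ a₂ ha₂ h) ?_ ?_
  · intro ψ hψ
    obtain ⟨φ, hφ, e⟩ := Finset.surj_on_of_inj_on_of_card_le (s := T) (t := T)
      (f := fun φ hφ => r φ hφ) (fun φ hφ => hrT φ hφ)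
      (fun a₁ a₂ ha₁ ha₂ h => hinj a₁ ha₁ a₂ ha₂ h) le_rfl ψ hψ
    exact ⟨φ, hφ, e.symm⟩
  · intro φ hφ
    rw [hc φ hφ]
    exact hF _ _ (hcu φ hφ)

lemma conj_neg_one_pow (m : ℕ) : (starRingEnd ℂ) ((-1:ℂ)^m) = (-1:ℂ)^m := by
  rw [map_pow, map_neg, map_one]

section Mlemmas
variable {n : ℕ} (T : Finset (QState n))
  (hstab : ∀ ψ ∈ T, IsStabilizerState n ψ)
  (hrep : ∀ φ : QState n, IsStabilizerState n φ → ∃ ψ ∈ T, Parallel ψ φ)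
  (huniq : ∀ ψ ∈ T, ∀ φ ∈ T, Parallel ψ φ → ψ = φ)
include hstab hrep huniq

lemma M_offdiag (b b' : Fin n → ZMod 2) (hbb : b ≠ b') :
    ∑ φ ∈ T, φ b * (starRingEnd ℂ) (φ b') = 0 := by
  obtain ⟨i, hi⟩ := Function.ne_iff.mp hbb
  set z' : Fin n → ZMod 2 := Pi.single i 1 with hz'
  have hsg : ∀ w : Fin n → ZMod 2, sg z' w = (-1:ℂ)^((w i).val) := by
    intro w
    unfold sg
    congr 1
    rw [Finset.sum_eq_single i]
    · simp [hz']
    · intro j _ hj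
      simp [hz', Pi.single_eq_of_ne hj]
    · simp
  set F : QState n → ℂ := fun φ => φ b * (starRingEnd ℂ) (φ b') with hFdef
  have hF : ∀ φ (c : ℂ), (starRingEnd ℂ) c * c = 1 → F (c • φ) = F φ := by
    intro φ c hcu
    simp only [hFdef, Pi.smul_apply, smul_eq_mul, map_mul]
    calc c * φ b * ((starRingEnd ℂ) c * (starRingEnd ℂ) (φ b'))
        = ((starRingEnd ℂ) c * c) * (φ b * (starRingEnd ℂ) (φ b')) := by ring
      _ = φ b * (starRingEnd ℂ) (φ b') := by rw [hcu, one_mul]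
  have hinv := sum_invariant T hstab hrep huniq (pauliFun n 0 0 z')
    (stab_Z z') (Zop_invol z') (fun c ψ => pauli_smul 0 0 z' c ψ) F hF
  have hneg : ∀ φ : QState n, F (pauliFun n 0 0 z' φ) = - F φ := by
    intro φ
    simp only [hFdef, Zop_apply, map_mul, conj_sg, hsg, conj_neg_one_pow]
    have hval : ((b i).val) + ((b' i).val) = 1 := by
      revert hi
      generalize b i = u
      generalize b' i = v
      revert u v
      decide
    have : ((-1:ℂ))^((b i).val) * ((-1:ℂ))^((b' i).val) = -1 := by
      rw [← pow_add, hval, pow_one]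
    calc (-1:ℂ)^((b i).val) * φ b * ((-1:ℂ)^((b' i).val) * (starRingEnd ℂ) (φ b'))
        = ((-1:ℂ)^((b i).val) * (-1:ℂ)^((b' i).val)) * (φ b * (starRingEnd ℂ) (φ b')) := by
          ring
      _ = - (φ b * (starRingEnd ℂ) (φ b')) := by rw [this]; ring
  rw [Finset.sum_congr rfl (fun φ _ => hneg φ), Finset.sum_neg_distrib] at hinv
  linear_combination (-1/2 : ℂ) * hinv

lemma M_diag (b b' : Fin n → ZMod 2) :
    ∑ φ ∈ T, φ b * (starRingEnd ℂ) (φ b) = ∑ φ ∈ T, φ b' * (starRingEnd ℂ) (φ b') := by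
  set F : QState n → ℂ := fun φ => φ b * (starRingEnd ℂ) (φ b) with hFdef
  have hF : ∀ φ (c : ℂ), (starRingEnd ℂ) c * c = 1 → F (c • φ) = F φ := by
    intro φ c hcu
    simp only [hFdef, Pi.smul_apply, smul_eq_mul, map_mul]
    calc c * φ b * ((starRingEnd ℂ) c * (starRingEnd ℂ) (φ b))
        = ((starRingEnd ℂ) c * c) * (φ b * (starRingEnd ℂ) (φ b)) := by ring
      _ = _ := by rw [hcu, one_mul]
  have hinv := sum_invariant T hstab hrep huniq (pauliFun n 0 (b + b') 0)
    (stab_X (b + b')) (Xop_invol (b + b')) (fun c ψ => pauli_smul 0 (b + b') 0 c ψ) F hF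
  have heval : ∀ φ : QState n, F (pauliFun n 0 (b + b') 0 φ) = φ b' * (starRingEnd ℂ) (φ b') := by
    intro φ
    simp only [hFdef, Xop_apply]
    rw [← add_assoc, self_add_self, zero_add]
  rw [Finset.sum_congr rfl (fun φ _ => heval φ)] at hinv
  exact hinv.symm

lemma M_diag_val (b : Fin n → ZMod 2) :
    ∑ φ ∈ T, φ b * (starRingEnd ℂ) (φ b) = (T.card : ℂ) / 2^n := by
  have htr : ∑ b' : Fin n → ZMod 2, (∑ φ ∈ T, φ b' * (starRingEnd ℂ) (φ b'))
      = (T.card : ℂ) := by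
    rw [Finset.sum_comm]
    have : ∀ φ ∈ T, ∑ b' : Fin n → ZMod 2, φ b' * (starRingEnd ℂ) (φ b') = 1 := by
      intro φ hφ
      have := (hstab φ hφ).1
      unfold qInner at this
      rw [← this]
      exact Finset.sum_congr rfl (fun b' _ => mul_comm _ _)
    rw [Finset.sum_congr rfl this, Finset.sum_const, nsmul_eq_mul, mul_one]
  have hconst : ∀ b' : Fin n → ZMod 2,
      (∑ φ ∈ T, φ b' * (starRingEnd ℂ) (φ b')) = ∑ φ ∈ T, φ b * (starRingEnd ℂ) (φ b) :=
    fun b' => M_diag T hstab hrep huniq b' b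
  rw [Finset.sum_congr rfl (fun b' _ => hconst b'), Finset.sum_const, nsmul_eq_mul,
    Finset.card_univ] at htr
  have hcard : (Fintype.card (Fin n → ZMod 2) : ℂ) = 2^n := by
    simp [Fintype.card_fun]
  rw [hcard] at htr
  have h2 : (2:ℂ)^n ≠ 0 := pow_ne_zero n two_ne_zero
  field_simp
  linear_combination htr

lemma second_moment (ψ : QState n) (hψ : qInner ψ ψ = 1) :
    ∑ φ ∈ T, qInner ψ φ * (starRingEnd ℂ) (qInner ψ φ) = (T.card : ℂ) / 2^n := by
  have expand : ∀ φ : QState n, qInner ψ φ * (starRingEnd ℂ) (qInner ψ φ)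
      = ∑ b, ∑ b', ((starRingEnd ℂ) (ψ b) * ψ b') * (φ b * (starRingEnd ℂ) (φ b')) := by
    intro φ
    unfold qInner
    rw [map_sum, Finset.sum_mul_sum]
    refine Finset.sum_congr rfl (fun b _ => Finset.sum_congr rfl (fun b' _ => ?_))
    rw [map_mul, Complex.conj_conj]
    ring
  calc ∑ φ ∈ T, qInner ψ φ * (starRingEnd ℂ) (qInner ψ φ)
      = ∑ b, ∑ b', ((starRingEnd ℂ) (ψ b) * ψ b') * (∑ φ ∈ T, φ b * (starRingEnd ℂ) (φ b')) := by
        rw [Finset.sum_congr rfl (fun φ _ => expand φ), Finset.sum_comm]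
        refine Finset.sum_congr rfl (fun b _ => ?_)
        rw [Finset.sum_comm]
        refine Finset.sum_congr rfl (fun b' _ => ?_)
        rw [Finset.mul_sum]
    _ = ∑ b, ((starRingEnd ℂ) (ψ b) * ψ b) * ((T.card : ℂ) / 2^n) := by
        refine Finset.sum_congr rfl (fun b _ => ?_)
        rw [Finset.sum_eq_single b]
        · rw [M_diag_val T hstab hrep huniq b]
        · intro b' _ hb'
          rw [M_offdiag T hstab hrep huniq b b' (Ne.symm hb'), mul_zero]
        · intro h
          exact absurd (Finset.mem_univ b) h
    _ = ((T.card : ℂ) / 2^n) * qInner ψ ψ := by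
        rw [← Finset.sum_mul]
        unfold qInner
        ring
    _ = (T.card : ℂ) / 2^n := by rw [hψ, mul_one]
end Mlemmas

lemma abs_sq_sum {n : ℕ} (T : Finset (QState n))
    (hstab : ∀ ψ ∈ T, IsStabilizerState n ψ)
    (hrep : ∀ φ : QState n, IsStabilizerState n φ → ∃ ψ ∈ T, Parallel ψ φ)
    (huniq : ∀ ψ ∈ T, ∀ φ ∈ T, Parallel ψ φ → ψ = φ)
    (ψ : QState n) (hψ : qInner ψ ψ = 1) :
    ∑ φ ∈ T, (‖qInner ψ φ‖)^2 = (T.card : ℝ) / 2^n := by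
  have key : ((∑ φ ∈ T, (‖qInner ψ φ‖)^2 : ℝ) : ℂ)
      = (((T.card : ℝ) / 2^n : ℝ) : ℂ) := by
    push_cast
    calc ∑ φ ∈ T, ((‖qInner ψ φ‖ : ℂ))^2
        = ∑ φ ∈ T, qInner ψ φ * (starRingEnd ℂ) (qInner ψ φ) := by
          refine Finset.sum_congr rfl (fun φ _ => ?_)
          rw [Complex.mul_conj, ← Complex.sq_norm]
          push_cast
          ring
      _ = (T.card : ℂ) / 2^n := second_moment T hstab hrep huniq ψ hψ
      _ = _ := by push_cast; ring
  exact_mod_cast key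

/-- For `ψ, φ` drawn independently and uniformly from the `n`-qubit stabilizer
states (represented by any system `T n` of representatives, one per global
phase class), the expected value of `|⟨ψ|φ⟩|` tends to `0` as `n → ∞`. -/
theorem expected_inner_tendsto_zero (T : ∀ n : ℕ, Finset (QState n))
    (hstab : ∀ n, ∀ ψ ∈ T n, IsStabilizerState n ψ)
    (hrep : ∀ n, ∀ φ : QState n, IsStabilizerState n φ → ∃ ψ ∈ T n, Parallel ψ φ)
    (huniq : ∀ n, ∀ ψ ∈ T n, ∀ φ ∈ T n, Parallel ψ φ → ψ = φ) :
    Filter.Tendsto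
      (fun n : ℕ =>
        (∑ ψ ∈ T n, ∑ φ ∈ T n, ‖qInner ψ φ‖) / ((T n).card : ℝ) ^ 2)
      Filter.atTop (nhds 0) := by
  set r : ℝ := (Real.sqrt 2)⁻¹ with hr
  have hr0 : 0 ≤ r := inv_nonneg.mpr (Real.sqrt_nonneg 2)
  have hs1 : (1:ℝ) < Real.sqrt 2 := by
    rw [show (1:ℝ) = Real.sqrt 1 by rw [Real.sqrt_one]]
    exact Real.sqrt_lt_sqrt zero_le_one one_lt_two
  have hr1 : r < 1 := inv_lt_one_of_one_lt₀ hs1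
  have hr2 : r^2 = 2⁻¹ := by
    rw [hr, inv_pow, Real.sq_sqrt (by norm_num : (0:ℝ) ≤ 2)]
  refine squeeze_zero (g := fun n => r ^ n) ?_ ?_
    (tendsto_pow_atTop_nhds_zero_of_lt_one hr0 hr1)
  · intro n
    apply div_nonneg _ (sq_nonneg _)
    exact Finset.sum_nonneg fun ψ _ => Finset.sum_nonneg fun φ _ =>
      norm_nonneg _
  · intro n
    set c : ℝ := ((T n).card : ℝ) with hc
    have hc0 : 0 ≤ c := Nat.cast_nonneg _
    -- row bound
    have row : ∀ ψ ∈ T n, ∑ φ ∈ T n, ‖qInner ψ φ‖ ≤ c * r ^ n := by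
      intro ψ hψ
      have hψ1 : qInner ψ ψ = 1 := (hstab n ψ hψ).1
      have hCS := Finset.sum_mul_sq_le_sq_mul_sq (T n) (fun _ => (1:ℝ))
        (fun φ => ‖qInner ψ φ‖)
      simp only [one_mul, one_pow] at hCS
      rw [Finset.sum_const, nsmul_eq_mul, mul_one,
        abs_sq_sum (T n) (hstab n) (hrep n) (huniq n) ψ hψ1] at hCS
      have hb0 : 0 ≤ c * r ^ n := mul_nonneg hc0 (pow_nonneg hr0 n)
      have hs0 : 0 ≤ ∑ φ ∈ T n, ‖qInner ψ φ‖ :=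
        Finset.sum_nonneg fun φ _ => norm_nonneg _
      refine (pow_le_pow_iff_left₀ hs0 hb0 two_ne_zero).mp ?_
      calc (∑ φ ∈ T n, ‖qInner ψ φ‖) ^ 2
          ≤ c * (c / 2 ^ n) := hCS
        _ = (c * r ^ n) ^ 2 := by
            have hsq : (c * r ^ n)^2 = c^2 * (r^2)^n := by ring
            rw [hsq, hr2, inv_pow]
            ring
    have total : ∑ ψ ∈ T n, ∑ φ ∈ T n, ‖qInner ψ φ‖ ≤ c^2 * r ^ n := by
      calc ∑ ψ ∈ T n, ∑ φ ∈ T n, ‖qInner ψ φ‖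
          ≤ ∑ _ψ ∈ T n, c * r ^ n := Finset.sum_le_sum row
        _ = c * (c * r ^ n) := by rw [Finset.sum_const, nsmul_eq_mul]
        _ = c^2 * r ^ n := by ring
    rcases eq_or_lt_of_le hc0 with h0 | hpos
    · have hTe : T n = ∅ := by
        rw [← Finset.card_eq_zero]
        have hcard : ((T n).card : ℝ) = 0 := h0.symm
        exact_mod_cast hcard
      simp [hTe]
      exact pow_nonneg hr0 n
    · rw [div_le_iff₀ (by positivity : (0:ℝ) < c^2)]
      calc ∑ ψ ∈ T n, ∑ φ ∈ T n, ‖qInner ψ φ‖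
          ≤ c^2 * r ^ n := total
        _ = r ^ n * c^2 := by ring
end
end

section
/- For each qubit pair (q,r) of an n-qubit stabilizer state, the nonzero double cofactors |ψ_{qr=ab}⟩ (a,b ∈ {0,1}) all have equal support and equal norm; in particular, the number of nonzero double cofactors cannot be exactly three. -/
open scoped BigOperators

noncomputable section

/-- The double cofactor of a state with respect to qubits `q, r` and bit values
`a, b`: the sub-sum of the state over basis states with `q`-th bit `a` and
`r`-th bit `b`. -/
def dcof {n : ℕ} (ψ : QState n) (q r : Fin n) (a b : ZMod 2) : QState n :=
  fun x => if x q = a ∧ x r = b then ψ x else 0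

namespace DC

open Matrix

variable {n : ℕ}

def χ (a : ZMod 2) : ℂ := (-1) ^ a.val

lemma zmod2_cases (a : ZMod 2) : a = 0 ∨ a = 1 := by revert a; decide

lemma χ_zero : χ 0 = 1 := by norm_num [χ, ZMod.val_zero]

lemma χ_one : χ 1 = -1 := by
  have : (1 : ZMod 2).val = 1 := rfl
  norm_num [χ, this]

lemma two_eq_zero : (1 + 1 : ZMod 2) = 0 := by decide

lemma χ_add (a b : ZMod 2) : χ (a + b) = χ a * χ b := by
  rcases zmod2_cases a with rfl | rfl <;> rcases zmod2_cases b with rfl | rfl <;>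
    simp [two_eq_zero, χ_zero, χ_one]

lemma χ_mul_self (a : ZMod 2) : χ a * χ a = 1 := by
  rcases zmod2_cases a with rfl | rfl <;> simp [χ_zero, χ_one]

lemma χ_abs (a : ZMod 2) : ‖χ a‖ = 1 := by
  rcases zmod2_cases a with rfl | rfl <;> simp [χ_zero, χ_one]

lemma χ_ne_zero (a : ZMod 2) : χ a ≠ 0 := by
  rcases zmod2_cases a with rfl | rfl <;> simp [χ_zero, χ_one]

lemma χ_inj {a b : ZMod 2} (h : χ a = χ b) : a = b := by
  rcases zmod2_cases a with rfl | rfl <;> rcases zmod2_cases b with rfl | rfl <;>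
    first | rfl | (rw [χ_zero, χ_one] at h; norm_num at h) | (rw [χ_one, χ_zero] at h; norm_num at h)

lemma neg_one_pow_sum (f : Fin n → ZMod 2) :
    ((-1 : ℂ)) ^ (∑ i, (f i).val) = χ (∑ i, f i) := by
  classical
  have H : ∀ s : Finset (Fin n),
      ((-1 : ℂ)) ^ (∑ i ∈ s, (f i).val) = χ (∑ i ∈ s, f i) := by
    intro s
    induction s using Finset.cons_induction with
    | empty => simp [χ_zero]
    | cons a s ha ih => rw [Finset.sum_cons, Finset.sum_cons, pow_add, ih, χ_add]; rfl

  exact H Finset.univ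

lemma zmod4_cases (a : ZMod 4) : a = 0 ∨ a = 1 ∨ a = 2 ∨ a = 3 := by revert a; decide

lemma I_pow_inj {a b : ZMod 4} (h : Complex.I ^ a.val = Complex.I ^ b.val) : a = b := by
  rcases zmod4_cases a with rfl|rfl|rfl|rfl <;> rcases zmod4_cases b with rfl|rfl|rfl|rfl <;>
    first
      | rfl
      | (exfalso; revert h;
         norm_num [show (0:ZMod 4).val = 0 from rfl, show (1:ZMod 4).val = 1 from rfl,
           show (2:ZMod 4).val = 2 from rfl, show (3:ZMod 4).val = 3 from rfl,
           pow_succ, Complex.ext_iff, Complex.I_mul_I])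


lemma pi_add_self (x : Fin n → ZMod 2) : x + x = 0 := by
  funext i
  have : ∀ a : ZMod 2, a + a = 0 := by decide
  exact this (x i)

lemma pauli_apply (k : ZMod 4) (x z : Fin n → ZMod 2) (ψ : QState n) (b : Fin n → ZMod 2) :
    pauliFun n k x z ψ b = Complex.I ^ k.val * χ (z ⬝ᵥ (b + x)) * ψ (b + x) := by
  unfold pauliFun
  rw [neg_one_pow_sum (fun i => z i * (b i + x i))]
  rfl

lemma stab_eval {ψ : QState n} {k : ZMod 4} {x z : Fin n → ZMod 2}
    (h : pauliFun n k x z ψ = ψ) (c : Fin n → ZMod 2) :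
    ψ (c + x) = Complex.I ^ k.val * χ (z ⬝ᵥ c) * ψ c := by
  have h2 := congrFun h (c + x)
  rw [pauli_apply] at h2
  rw [add_assoc, pi_add_self, add_zero] at h2
  exact h2.symm

lemma unit_ne_zero (k : ZMod 4) (a : ZMod 2) : Complex.I ^ k.val * χ a ≠ 0 := by
  apply mul_ne_zero (pow_ne_zero _ Complex.I_ne_zero)
  intro h
  have := χ_abs a
  rw [h] at this; simp at this

lemma stab_abs {ψ : QState n} {k : ZMod 4} {x z : Fin n → ZMod 2}
    (h : pauliFun n k x z ψ = ψ) (c : Fin n → ZMod 2) :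
    ‖ψ (c + x)‖ = ‖ψ c‖ := by
  rw [stab_eval h c]
  rw [norm_mul, norm_mul, norm_pow, Complex.norm_I, one_pow, χ_abs, one_mul, one_mul]

lemma toDual_dot (v w : Fin n → ZMod 2) :
    (Pi.basisFun (ZMod 2) (Fin n)).toDual v w = v ⬝ᵥ w := by
  classical
  have h1 : v = ∑ i, (v i) • (Pi.basisFun (ZMod 2) (Fin n)) i := by
    simp [Pi.basisFun_apply]
    funext j
    simp [Pi.single_apply]
  conv_lhs => rw [h1]
  rw [map_sum, LinearMap.sum_apply]
  have h2 : ∀ i : Fin n, ((Pi.basisFun (ZMod 2) (Fin n)).toDual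
      ((Pi.basisFun (ZMod 2) (Fin n)) i)) w = w i := by
    intro i
    rw [Module.Basis.toDual_apply_right, Pi.basisFun_repr]
  simp only [_root_.map_smul, LinearMap.smul_apply, h2]
  simp [dotProduct, smul_eq_mul]

def dotlm (w : Fin n → ZMod 2) : (Fin n → ZMod 2) →ₗ[ZMod 2] ZMod 2 where
  toFun v := v ⬝ᵥ w
  map_add' u v := add_dotProduct u v w
  map_smul' c v := smul_dotProduct c v w


lemma zmod2_add_self (a : ZMod 2) : a + a = 0 := by revert a; decide

lemma exists_translation {ψ : QState n}
    (hcard : (stabGroup n ψ).ncard = 2 ^ n)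
    {u v : Fin n → ZMod 2} (hu : ψ u ≠ 0) (hv : ψ v ≠ 0) :
    ∃ k z, pauliFun n k (u + v) z ψ = ψ := by
  classical
  set e : ZMod 4 × (Fin n → ZMod 2) × (Fin n → ZMod 2) → (QState n → QState n) :=
    fun t => pauliFun n t.1 t.2.1 t.2.2 with he
  set P : Finset (ZMod 4 × (Fin n → ZMod 2) × (Fin n → ZMod 2)) :=
    Finset.univ.filter (fun t => pauliFun n t.1 t.2.1 t.2.2 ψ = ψ) with hP
  have hmemP : ∀ t, t ∈ P ↔ pauliFun n t.1 t.2.1 t.2.2 ψ = ψ := by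
    intro t; simp [hP]
  have hSP : stabGroup n ψ = e '' ↑P := by
    ext U
    constructor
    · rintro ⟨⟨k, x, z, rfl⟩, hfix⟩
      exact ⟨(k, x, z), (hmemP _).2 hfix, rfl⟩
    · rintro ⟨t, ht, rfl⟩
      exact ⟨⟨t.1, t.2.1, t.2.2, rfl⟩, (hmemP _).1 ht⟩
  have hPcard : 2 ^ n ≤ P.card := by
    calc 2 ^ n = (stabGroup n ψ).ncard := hcard.symm
    _ = (e '' ↑P).ncard := by rw [hSP]
    _ ≤ (↑P : Set (ZMod 4 × (Fin n → ZMod 2) × (Fin n → ZMod 2))).ncard :=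
        Set.ncard_image_le P.finite_toSet
    _ = P.card := Set.ncard_coe_finset P
  set V : Submodule (ZMod 2) (Fin n → ZMod 2) :=
    Submodule.span (ZMod 2) ((· + u) '' {x | ψ x ≠ 0}) with hV
  set B := Pi.basisFun (ZMod 2) (Fin n) with hB
  set Vperp : Submodule (ZMod 2) (Fin n → ZMod 2) :=
    (V.map (B.toDualEquiv :
          (Fin n → ZMod 2) →ₗ[ZMod 2] Module.Dual (ZMod 2) (Fin n → ZMod 2))).dualCoannihilator with hVperp
  have hmemVperp : ∀ w, w ∈ Vperp ↔ ∀ y ∈ V, y ⬝ᵥ w = 0 := by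
    intro w
    rw [hVperp, Submodule.mem_dualCoannihilator]
    constructor
    · intro h y hy
      have h2 := h ((B.toDualEquiv :
          (Fin n → ZMod 2) →ₗ[ZMod 2] Module.Dual (ZMod 2) (Fin n → ZMod 2)) y)
        (Submodule.mem_map_of_mem hy)
      rwa [LinearEquiv.coe_coe, Module.Basis.toDualEquiv_apply, toDual_dot] at h2
    · rintro h f ⟨y, hy, rfl⟩
      rw [LinearEquiv.coe_coe, Module.Basis.toDualEquiv_apply, toDual_dot]
      exact h y hy
  have hfr : Module.finrank (ZMod 2) V + Module.finrank (ZMod 2) Vperp = n := by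
    have h1 := Subspace.finrank_add_finrank_dualCoannihilator_eq
        (V.map (B.toDualEquiv :
          (Fin n → ZMod 2) →ₗ[ZMod 2] Module.Dual (ZMod 2) (Fin n → ZMod 2)))
    rw [LinearEquiv.finrank_map_eq] at h1
    rwa [Module.finrank_fintype_fun_eq_card, Fintype.card_fin] at h1
  have cardfil : ∀ (W : Submodule (ZMod 2) (Fin n → ZMod 2)),
      (Finset.univ.filter (fun w => w ∈ W)).card = 2 ^ Module.finrank (ZMod 2) W := by
    intro W
    rw [← Fintype.card_subtype, Module.card_eq_pow_finrank (K := ZMod 2) (V := W), ZMod.card]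
  set π : ZMod 4 × (Fin n → ZMod 2) × (Fin n → ZMod 2) → (Fin n → ZMod 2) :=
    fun t => t.2.1 with hπ
  set Vf := Finset.univ.filter (fun w => w ∈ V) with hVf
  set Zf := Finset.univ.filter (fun w => w ∈ Vperp) with hZf
  have hfiber : ∀ x ∈ P.image π, (P.filter (fun t => π t = x)).card ≤ Zf.card := by
    intro x hx
    obtain ⟨t₀, ht₀P, ht₀x⟩ := Finset.mem_image.1 hx
    have hfix₀ : pauliFun n t₀.1 x t₀.2.2 ψ = ψ := by
      have h3 := (hmemP t₀).1 ht₀P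
      rw [show t₀.2.1 = x from ht₀x] at h3
      exact h3
    apply Finset.card_le_card_of_injOn (fun t => t.2.2 + t₀.2.2)
    · intro t ht
      rw [Finset.mem_coe, Finset.mem_filter] at ht
      obtain ⟨htP, htx⟩ := ht
      have hfix : pauliFun n t.1 x t.2.2 ψ = ψ := by
        have h3 := (hmemP t).1 htP
        rw [show t.2.1 = x from htx] at h3
        exact h3
      rw [hZf, Finset.mem_coe, Finset.mem_filter]
      refine ⟨Finset.mem_univ _, ?_⟩
      rw [hmemVperp]
      -- key analytic claim
      have keyA : ∀ d, ψ d ≠ 0 →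
          χ (t.2.2 ⬝ᵥ d + t₀.2.2 ⬝ᵥ d) * Complex.I ^ t.1.val = Complex.I ^ t₀.1.val := by
        intro d hd
        have e1 : Complex.I ^ t.1.val * χ (t.2.2 ⬝ᵥ d) =
            Complex.I ^ t₀.1.val * χ (t₀.2.2 ⬝ᵥ d) :=
          mul_right_cancel₀ hd (by rw [← stab_eval hfix d, ← stab_eval hfix₀ d])
        calc χ (t.2.2 ⬝ᵥ d + t₀.2.2 ⬝ᵥ d) * Complex.I ^ t.1.val
            = χ (t₀.2.2 ⬝ᵥ d) * (Complex.I ^ t.1.val * χ (t.2.2 ⬝ᵥ d)) := by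
              rw [χ_add]; ring
          _ = χ (t₀.2.2 ⬝ᵥ d) * (Complex.I ^ t₀.1.val * χ (t₀.2.2 ⬝ᵥ d)) := by rw [e1]
          _ = Complex.I ^ t₀.1.val * (χ (t₀.2.2 ⬝ᵥ d) * χ (t₀.2.2 ⬝ᵥ d)) := by ring
          _ = Complex.I ^ t₀.1.val := by rw [χ_mul_self, mul_one]
      have hker : V ≤ LinearMap.ker (dotlm (t.2.2 + t₀.2.2)) := by
        rw [hV]
        apply Submodule.span_le.2
        rintro _ ⟨c, hc, rfl⟩
        rw [SetLike.mem_coe, LinearMap.mem_ker]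
        show (c + u) ⬝ᵥ (t.2.2 + t₀.2.2) = 0
        have h4 : χ (t.2.2 ⬝ᵥ c + t₀.2.2 ⬝ᵥ c) = χ (t.2.2 ⬝ᵥ u + t₀.2.2 ⬝ᵥ u) :=
          mul_right_cancel₀ (pow_ne_zero _ Complex.I_ne_zero)
            ((keyA c hc).trans (keyA u hu).symm)
        have h5 : t.2.2 ⬝ᵥ c + t₀.2.2 ⬝ᵥ c = t.2.2 ⬝ᵥ u + t₀.2.2 ⬝ᵥ u := χ_inj h4
        have h6 : (c + u) ⬝ᵥ (t.2.2 + t₀.2.2)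
            = (t.2.2 ⬝ᵥ c + t₀.2.2 ⬝ᵥ c) + (t.2.2 ⬝ᵥ u + t₀.2.2 ⬝ᵥ u) := by
          rw [dotProduct_comm, dotProduct_add, add_dotProduct, add_dotProduct]
        rw [h6]
        rw [h5]
        exact zmod2_add_self _
      intro y hy
      have h7 := hker hy
      rw [LinearMap.mem_ker] at h7
      exact h7
    · intro t ht t' ht' hz
      simp only [Finset.coe_filter, Set.mem_setOf_eq] at ht ht'
      obtain ⟨htP, htx⟩ := ht
      obtain ⟨ht'P, ht'x⟩ := ht'
      have hz2 : t.2.2 = t'.2.2 := by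
        have := add_right_cancel hz
        exact this
      have hfix : pauliFun n t.1 x t.2.2 ψ = ψ := by
        have h3 := (hmemP t).1 htP; rw [show t.2.1 = x from htx] at h3; exact h3
      have hfix' : pauliFun n t'.1 x t.2.2 ψ = ψ := by
        have h3 := (hmemP t').1 ht'P; rw [show t'.2.1 = x from ht'x, ← hz2] at h3; exact h3
      have e1 : Complex.I ^ t.1.val * χ (t.2.2 ⬝ᵥ u) =
          Complex.I ^ t'.1.val * χ (t.2.2 ⬝ᵥ u) :=
        mul_right_cancel₀ hu (by rw [← stab_eval hfix u, ← stab_eval hfix' u])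
      have hk : t.1 = t'.1 := I_pow_inj (mul_right_cancel₀ (χ_ne_zero _) e1)
      have hx2 : t.2.1 = t'.2.1 := by
        rw [show t.2.1 = x from htx, show t'.2.1 = x from ht'x]
      exact Prod.ext hk (Prod.ext hx2 hz2)
  have himV : P.image π ⊆ Vf := by
    intro x hx
    obtain ⟨t, htP, htx⟩ := Finset.mem_image.1 hx
    have hfix : pauliFun n t.1 x t.2.2 ψ = ψ := by
      have h3 := (hmemP t).1 htP; rw [show t.2.1 = x from htx] at h3; exact h3
    have h1 : ψ (u + x) ≠ 0 := by
      rw [stab_eval hfix u]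
      exact mul_ne_zero (unit_ne_zero _ _) hu
    have h2 : x = (u + x) + u := by
      rw [add_comm (u + x) u, ← add_assoc, pi_add_self, zero_add]
    rw [hVf, Finset.mem_filter]
    refine ⟨Finset.mem_univ _, ?_⟩
    rw [h2]
    exact Submodule.subset_span ⟨u + x, h1, rfl⟩
  have hZV : Zf.card * Vf.card = 2 ^ n := by
    rw [hZf, hVf, cardfil, cardfil, ← pow_add, Nat.add_comm, hfr]
  have hle : 2 ^ n ≤ Zf.card * (P.image π).card :=
    le_trans hPcard (Finset.card_le_mul_card_image P _ hfiber)
  have hZpos : 0 < Zf.card := by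
    apply Finset.card_pos.2
    exact ⟨0, by rw [hZf, Finset.mem_filter]; exact ⟨Finset.mem_univ _, Submodule.zero_mem _⟩⟩
  have hmul : Zf.card * Vf.card ≤ Zf.card * (P.image π).card := hZV ▸ hle
  have hVim : Vf.card ≤ (P.image π).card := Nat.le_of_mul_le_mul_left hmul hZpos
  have heq : P.image π = Vf := Finset.eq_of_subset_of_card_le himV hVim
  have huv : u + v ∈ Vf := by
    rw [hVf, Finset.mem_filter]
    refine ⟨Finset.mem_univ _, ?_⟩
    rw [add_comm u v]
    exact Submodule.subset_span ⟨v, hv, rfl⟩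
  rw [← heq] at huv
  obtain ⟨t, htP, htx⟩ := Finset.mem_image.1 huv
  refine ⟨t.1, t.2.2, ?_⟩
  have h3 := (hmemP t).1 htP
  rw [show t.2.1 = u + v from htx] at h3
  exact h3


lemma dcof_apply_ne (ψ : QState n) (q r : Fin n) (a b : ZMod 2) (x : Fin n → ZMod 2) :
    dcof ψ q r a b x ≠ 0 ↔ (x q = a ∧ x r = b) ∧ ψ x ≠ 0 := by
  unfold dcof
  by_cases h : x q = a ∧ x r = b <;> simp [h]

lemma dcof_ne_zero_iff {ψ : QState n} {q r : Fin n} {a b : ZMod 2} :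
    dcof ψ q r a b ≠ 0 ↔ ∃ x, (x q = a ∧ x r = b) ∧ ψ x ≠ 0 := by
  rw [Function.ne_iff]
  exact exists_congr fun x => by rw [← dcof_apply_ne ψ q r a b x]; rfl

lemma abs_pres_ne {ψ : QState n} {t : Fin n → ZMod 2}
    (ht : ∀ c, ‖ψ (c + t)‖ = ‖ψ c‖)
    (c : Fin n → ZMod 2) (h : ψ c ≠ 0) : ψ (c + t) ≠ 0 := by
  intro h0
  apply h
  have h1 := ht c
  rw [h0, norm_zero] at h1
  exact (norm_eq_zero.1 h1.symm)

lemma key_trans {ψ : QState n} (hψ : IsStabilizerState n ψ) (q r : Fin n)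
    {p p' : ZMod 2 × ZMod 2} (hp : dcof ψ q r p.1 p.2 ≠ 0) (hp' : dcof ψ q r p'.1 p'.2 ≠ 0) :
    ∃ t : Fin n → ZMod 2, (∀ c, ‖ψ (c + t)‖ = ‖ψ c‖) ∧
      t q = p.1 + p'.1 ∧ t r = p.2 + p'.2 := by
  obtain ⟨x1, ⟨hq1, hr1⟩, hx1⟩ := dcof_ne_zero_iff.1 hp
  obtain ⟨x2, ⟨hq2, hr2⟩, hx2⟩ := dcof_ne_zero_iff.1 hp'
  obtain ⟨k, z, hfix⟩ := exists_translation hψ.2 hx1 hx2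
  exact ⟨x1 + x2, fun c => stab_abs hfix c,
    by rw [Pi.add_apply, hq1, hq2], by rw [Pi.add_apply, hr1, hr2]⟩


end DC

open DC Matrix in
/-- For a stabilizer state and any pair of qubits, all nonzero double cofactors
have equal support and equal norm; in particular the number of nonzero double
cofactors cannot be exactly three. -/
theorem double_cofactors_equal (n : ℕ) (ψ : QState n)
    (hψ : IsStabilizerState n ψ) (q r : Fin n) (hqr : q ≠ r) :
    (∀ a b a' b' : ZMod 2, dcof ψ q r a b ≠ 0 → dcof ψ q r a' b' ≠ 0 →
      {x | dcof ψ q r a b x ≠ 0}.ncard = {x | dcof ψ q r a' b' x ≠ 0}.ncard ∧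
      qInner (dcof ψ q r a b) (dcof ψ q r a b) =
        qInner (dcof ψ q r a' b') (dcof ψ q r a' b')) ∧
    {p : ZMod 2 × ZMod 2 | dcof ψ q r p.1 p.2 ≠ 0}.ncard ≠ 3 := by
  constructor
  · intro a b a' b' hab ha'b'
    obtain ⟨t, ht, htq, htr⟩ := key_trans hψ q r (p := (a, b)) (p' := (a', b')) hab ha'b'
    have hiff : ∀ (w aa aa' : ZMod 2), w + (aa + aa') = aa ↔ w = aa' := by decide
    have hcond : ∀ x : Fin n → ZMod 2,
        ((x + t) q = a ∧ (x + t) r = b) ↔ (x q = a' ∧ x r = b') := by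
      intro x
      rw [Pi.add_apply, Pi.add_apply, htq, htr, hiff, hiff]
    have hset : {x | dcof ψ q r a b x ≠ 0} = (fun x => x + t) '' {x | dcof ψ q r a' b' x ≠ 0} := by
      ext x
      simp only [Set.mem_setOf_eq, Set.mem_image]
      rw [dcof_apply_ne]
      constructor
      · rintro ⟨⟨hxq, hxr⟩, hxψ⟩
        refine ⟨x + t, ?_, by rw [add_assoc, pi_add_self, add_zero]⟩
        rw [dcof_apply_ne]
        refine ⟨(hcond (x + t)).1 ?_, abs_pres_ne ht x hxψ⟩
        rw [add_assoc, pi_add_self, add_zero]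
        exact ⟨hxq, hxr⟩
      · rintro ⟨y, hy, rfl⟩
        rw [dcof_apply_ne] at hy
        exact ⟨(hcond y).2 hy.1, abs_pres_ne ht y hy.2⟩
    constructor
    · rw [hset, Set.ncard_image_of_injective _ (add_left_injective t)]
    · unfold qInner
      refine (Fintype.sum_equiv (Equiv.addRight t) _ _ ?_).symm
      intro x
      show (starRingEnd ℂ) (dcof ψ q r a' b' x) * dcof ψ q r a' b' x
          = (starRingEnd ℂ) (dcof ψ q r a b (x + t)) * dcof ψ q r a b (x + t)
      by_cases hc : x q = a' ∧ x r = b'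
      · rw [show dcof ψ q r a' b' x = ψ x from if_pos hc,
            show dcof ψ q r a b (x + t) = ψ (x + t) from if_pos ((hcond x).2 hc)]
        rw [mul_comm, mul_comm ((starRingEnd ℂ) (ψ (x + t))) (ψ (x + t)),
            Complex.mul_conj, Complex.mul_conj, Complex.ofReal_inj,
            ← Complex.sq_norm, ← Complex.sq_norm, ht x]
      · rw [show dcof ψ q r a' b' x = 0 from if_neg hc,
            show dcof ψ q r a b (x + t) = 0 from if_neg (fun hcc => hc ((hcond x).1 hcc))]
  · intro h3
    rw [Set.ncard_eq_three] at h3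
    obtain ⟨p1, p2, p3, h12, h13, h23, hD⟩ := h3
    have hmem : ∀ p : ZMod 2 × ZMod 2,
        dcof ψ q r p.1 p.2 ≠ 0 ↔ p ∈ ({p1, p2, p3} : Set (ZMod 2 × ZMod 2)) := by
      intro p
      constructor
      · intro hp; rw [← hD]; exact hp
      · intro hp; rw [← hD] at hp; exact hp
    have hp1 : dcof ψ q r p1.1 p1.2 ≠ 0 := (hmem p1).2 (by simp)
    have hp2 : dcof ψ q r p2.1 p2.2 ≠ 0 := (hmem p2).2 (by simp)
    have hp3 : dcof ψ q r p3.1 p3.2 ≠ 0 := (hmem p3).2 (by simp)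
    obtain ⟨t, ht, htq, htr⟩ := key_trans hψ q r hp2 hp3
    obtain ⟨x1, ⟨hq1, hr1⟩, hx1⟩ := dcof_ne_zero_iff.1 hp1
    set p0 : ZMod 2 × ZMod 2 := (p1.1 + (p2.1 + p3.1), p1.2 + (p2.2 + p3.2)) with hp0
    have h0 : dcof ψ q r p0.1 p0.2 ≠ 0 := by
      rw [dcof_ne_zero_iff]
      exact ⟨x1 + t, ⟨by rw [Pi.add_apply, hq1, htq], by rw [Pi.add_apply, hr1, htr]⟩,
        abs_pres_ne ht x1 hx1⟩
    have h0' := (hmem p0).1 h0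
    simp only [Set.mem_insert_iff, Set.mem_singleton_iff] at h0'
    have zc1 : ∀ α β γ : ZMod 2, α + (β + γ) = α → β = γ := by decide
    have zc2 : ∀ α β γ : ZMod 2, α + (β + γ) = β → α = γ := by decide
    have zc3 : ∀ α β γ : ZMod 2, α + (β + γ) = γ → α = β := by decide
    rcases h0' with h | h | h
    · exact h23 (Prod.ext (zc1 _ _ _ (congrArg Prod.fst h)) (zc1 _ _ _ (congrArg Prod.snd h)))
    · exact h13 (Prod.ext (zc2 _ _ _ (congrArg Prod.fst h)) (zc2 _ _ _ (congrArg Prod.snd h)))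
    · exact h12 (Prod.ext (zc3 _ _ _ (congrArg Prod.fst h)) (zc3 _ _ _ (congrArg Prod.snd h)))
end
end
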